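/- Let σ : ℝ → (0,∞) be continuous, c : ℝ → ℝ continuous and even, strictly increasing on ℝ₊ with c(x) → ∞ as x → ∞, σ even, and q := (q_d + q_u)/2 > 0. Then the equation ĝ(b) := q + ∫_{-b}^{b} c(t)/σ²(t) dt - c(b)·∫_{-b}^{b} 1/σ²(t) dt = 0 has a unique positive root b*, and ĝ(b) > 0 for 0 < b < b* while ĝ(b) < 0 for b > b*. -/

import Mathlib

open Real Filter

theorem stmt12 (σ c : ℝ → ℝ)
    (hσcont : Continuous σ) (hσpos : ∀ x, 0 < σ x) (hσeven : ∀ x, σ (-x) = σ x)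
    (hccont : Continuous c) (hceven : ∀ x, c (-x) = c x)
    (hcmono : StrictMonoOn c (Set.Ici 0)) (hctop : Tendsto c atTop atTop)
    (q : ℝ) (hq : 0 < q)
    (ghat : ℝ → ℝ)
    (hghat : ∀ b, ghat b = q + (∫ t in (-b)..b, c t / σ t ^ 2)
        - c b * ∫ t in (-b)..b, 1 / σ t ^ 2) :
    ∃! bstar : ℝ, 0 < bstar ∧ ghat bstar = 0 ∧
      (∀ b, 0 < b → b < bstar → 0 < ghat b) ∧
      (∀ b, bstar < b → ghat b < 0) := by
  have hσ2 : ∀ t, (0:ℝ) < σ t ^ 2 := fun t => pow_pos (hσpos t) 2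
  have hσ2ne : ∀ t, σ t ^ 2 ≠ 0 := fun t => (hσ2 t).ne'
  have hcontf : ∀ (k : ℝ), Continuous (fun t => (k - c t) / σ t ^ 2) :=
    fun k => (continuous_const.sub hccont).div (hσcont.pow 2) hσ2ne
  have hconti : Continuous (fun t : ℝ => 1 / σ t ^ 2) :=
    continuous_const.div (hσcont.pow 2) hσ2ne
  have hcontc : Continuous (fun t : ℝ => c t / σ t ^ 2) :=
    hccont.div (hσcont.pow 2) hσ2ne
  have hint : ∀ (g : ℝ → ℝ), Continuous g → ∀ a b : ℝ,
      IntervalIntegrable g MeasureTheory.volume a b :=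
    fun g hg a b => hg.intervalIntegrable a b
  -- rewrite ghat as q minus an integral
  have hrw : ∀ b, ghat b = q - ∫ t in (-b)..b, (c b - c t) / σ t ^ 2 := by
    intro b
    rw [hghat]
    have h1 : (∫ t in (-b)..b, (c b - c t) / σ t ^ 2)
        = (∫ t in (-b)..b, c b * (1 / σ t ^ 2)) - ∫ t in (-b)..b, c t / σ t ^ 2 := by
      rw [← intervalIntegral.integral_sub (hint (fun t => c b * (1 / σ t ^ 2)) (continuous_const.mul hconti) _ _)
        (hint _ hcontc _ _)]
      congr 1
      funext t
      rw [mul_one_div, div_sub_div_same]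
    rw [h1, intervalIntegral.integral_const_mul]
    ring
  -- c t ≤ c b whenever -b ≤ t ≤ b, 0 ≤ b
  have hcle : ∀ b t : ℝ, 0 ≤ b → -b ≤ t → t ≤ b → c t ≤ c b := by
    intro b t hb h1 h2
    have habs : |t| ≤ b := abs_le.mpr ⟨h1, h2⟩
    have hct : c t = c |t| := by
      rcases abs_choice t with h | h
      · rw [h]
      · rw [h, hceven]
    rw [hct]
    exact hcmono.monotoneOn (Set.mem_Ici.mpr (abs_nonneg t)) (Set.mem_Ici.mpr hb) habs
  -- strict antitonicity on [0, ∞)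
  have hanti : StrictAntiOn ghat (Set.Ici 0) := by
    intro b1 hb1 b2 hb2 hlt
    simp only [Set.mem_Ici] at hb1 hb2
    rw [hrw b1, hrw b2]
    have hnb : -b2 ≤ -b1 := by linarith
    have hnb1 : -b1 ≤ b1 := by linarith
    have hs2 : (∫ t in (-b1)..b1, (c b2 - c t) / σ t ^ 2)
        + (∫ t in b1..b2, (c b2 - c t) / σ t ^ 2)
        = ∫ t in (-b1)..b2, (c b2 - c t) / σ t ^ 2 :=
      intervalIntegral.integral_add_adjacent_intervals (hint _ (hcontf _) _ _)
        (hint _ (hcontf _) _ _)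
    have hs1 : (∫ t in (-b2)..(-b1), (c b2 - c t) / σ t ^ 2)
        + (∫ t in (-b1)..b2, (c b2 - c t) / σ t ^ 2)
        = ∫ t in (-b2)..b2, (c b2 - c t) / σ t ^ 2 :=
      intervalIntegral.integral_add_adjacent_intervals (hint _ (hcontf _) _ _)
        (hint _ (hcontf _) _ _)
    have hA : 0 ≤ ∫ t in (-b2)..(-b1), (c b2 - c t) / σ t ^ 2 := by
      apply intervalIntegral.integral_nonneg hnb
      intro u hu
      have h1 : -b2 ≤ u := hu.1
      have h2 : u ≤ b2 := le_trans hu.2 (by linarith)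
      have := hcle b2 u hb2 h1 h2
      exact div_nonneg (by linarith) (hσ2 u).le
    have hC : 0 < ∫ t in b1..b2, (c b2 - c t) / σ t ^ 2 := by
      apply intervalIntegral.intervalIntegral_pos_of_pos_on (hint _ (hcontf _) _ _) _ hlt
      intro x hx
      have h1 : c x < c b2 := hcmono (le_trans hb1 hx.1.le) hb2 hx.2
      have h2 : (0:ℝ) < c b2 - c x := by linarith
      exact div_pos h2 (hσ2 x)
    have hB : (∫ t in (-b1)..b1, (c b1 - c t) / σ t ^ 2)
        ≤ ∫ t in (-b1)..b1, (c b2 - c t) / σ t ^ 2 := by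
      apply intervalIntegral.integral_mono_on hnb1 (hint _ (hcontf _) _ _)
        (hint _ (hcontf _) _ _)
      intro x _
      have h1 : c b1 ≤ c b2 := (hcmono hb1 hb2 hlt).le
      gcongr
    linarith
  -- continuity of ghat
  have hFcont : Continuous (fun b : ℝ => ∫ t in (0:ℝ)..b, c t / σ t ^ 2) :=
    intervalIntegral.continuous_primitive (fun a b => hint _ hcontc a b) 0
  have hJcont : Continuous (fun b : ℝ => ∫ t in (0:ℝ)..b, 1 / σ t ^ 2) :=
    intervalIntegral.continuous_primitive (fun a b => hint _ hconti a b) 0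
  have hsplit : ∀ (g : ℝ → ℝ), Continuous g → ∀ b : ℝ,
      (∫ t in (-b)..b, g t) = (∫ t in (0:ℝ)..b, g t) - ∫ t in (0:ℝ)..(-b), g t := by
    intro g hg b
    have := intervalIntegral.integral_add_adjacent_intervals
      (hint _ hg (-b) 0) (hint _ hg 0 b)
    rw [← this, intervalIntegral.integral_symm]
    ring
  have hgcont : Continuous ghat := by
    have : ghat = fun b =>
        q + ((∫ t in (0:ℝ)..b, c t / σ t ^ 2) - ∫ t in (0:ℝ)..(-b), c t / σ t ^ 2)
          - c b * ((∫ t in (0:ℝ)..b, 1 / σ t ^ 2) - ∫ t in (0:ℝ)..(-b), 1 / σ t ^ 2) := by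
      funext b
      rw [hghat b, hsplit _ hcontc b, hsplit _ hconti b]
    rw [this]
    exact ((continuous_const.add (hFcont.sub (hFcont.comp continuous_neg))).sub
      (hccont.mul (hJcont.sub (hJcont.comp continuous_neg))))
  -- ghat 0 = q
  have hg0 : ghat 0 = q := by
    rw [hrw 0]
    simp
  -- find B with ghat B < 0
  have hm : 0 < ∫ t in (0:ℝ)..1, 1 / σ t ^ 2 := by
    apply intervalIntegral.intervalIntegral_pos_of_pos_on (hint _ hconti _ _) _ one_pos
    intro x _
    exact div_pos one_pos (hσ2 x)
  set m : ℝ := ∫ t in (0:ℝ)..1, 1 / σ t ^ 2 with hmdef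
  obtain ⟨B, hB⟩ := ((hctop.eventually (eventually_ge_atTop (c 1 + (q + 1) / m))).and
    (eventually_ge_atTop (1:ℝ))).exists
  obtain ⟨hcB, hB1⟩ := hB
  have hB0 : (0:ℝ) ≤ B := le_trans zero_le_one hB1
  have hghatB : ghat B < 0 := by
    rw [hrw B]
    have hs2 : (∫ t in (0:ℝ)..1, (c B - c t) / σ t ^ 2)
        + (∫ t in (1:ℝ)..B, (c B - c t) / σ t ^ 2)
        = ∫ t in (0:ℝ)..B, (c B - c t) / σ t ^ 2 :=
      intervalIntegral.integral_add_adjacent_intervals (hint _ (hcontf _) _ _)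
        (hint _ (hcontf _) _ _)
    have hs1 : (∫ t in (-B)..(0:ℝ), (c B - c t) / σ t ^ 2)
        + (∫ t in (0:ℝ)..B, (c B - c t) / σ t ^ 2)
        = ∫ t in (-B)..B, (c B - c t) / σ t ^ 2 :=
      intervalIntegral.integral_add_adjacent_intervals (hint _ (hcontf _) _ _)
        (hint _ (hcontf _) _ _)
    have hA : 0 ≤ ∫ t in (-B)..(0:ℝ), (c B - c t) / σ t ^ 2 := by
      apply intervalIntegral.integral_nonneg (by linarith)
      intro u hu
      have := hcle B u hB0 hu.1 (le_trans hu.2 hB0)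
      exact div_nonneg (by linarith) (hσ2 u).le
    have hC : 0 ≤ ∫ t in (1:ℝ)..B, (c B - c t) / σ t ^ 2 := by
      apply intervalIntegral.integral_nonneg hB1
      intro u hu
      have := hcle B u hB0 (le_trans (by linarith) hu.1) hu.2
      exact div_nonneg (by linarith) (hσ2 u).le
    have hD : (c B - c 1) * m ≤ ∫ t in (0:ℝ)..1, (c B - c t) / σ t ^ 2 := by
      have heq : (c B - c 1) * m = ∫ t in (0:ℝ)..1, (c B - c 1) * (1 / σ t ^ 2) := by
        rw [intervalIntegral.integral_const_mul]
      rw [heq]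
      apply intervalIntegral.integral_mono_on zero_le_one
        (hint (fun t => (c B - c 1) * (1 / σ t ^ 2)) (continuous_const.mul hconti) _ _) (hint _ (hcontf _) _ _)
      intro x hx
      rw [mul_one_div]
      have h1 : c x ≤ c 1 := hcmono.monotoneOn (Set.mem_Ici.mpr hx.1)
        (Set.mem_Ici.mpr zero_le_one) hx.2
      gcongr
    have hcBm : q + 1 ≤ (c B - c 1) * m := by
      have : (q + 1) / m * m ≤ (c B - c 1) * m := by
        apply mul_le_mul_of_nonneg_right _ hm.le
        linarith
      rwa [div_mul_cancel₀ _ hm.ne'] at this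
    linarith
  -- intermediate value theorem
  have hiv : (0:ℝ) ∈ Set.Icc (ghat B) (ghat 0) := ⟨hghatB.le, by rw [hg0]; exact hq.le⟩
  obtain ⟨bstar, hbmem, hbzero⟩ :=
    intermediate_value_Icc' hB0 hgcont.continuousOn hiv
  have hbpos : 0 < bstar := by
    rcases hbmem.1.lt_or_eq with h | h
    · exact h
    · exfalso
      rw [← h, hg0] at hbzero
      exact hq.ne' hbzero
  refine ⟨bstar, ⟨hbpos, hbzero, ?_, ?_⟩, ?_⟩
  · intro b hb hblt
    have := hanti (Set.mem_Ici.mpr hb.le) (Set.mem_Ici.mpr hbpos.le) hblt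
    rwa [hbzero] at this
  · intro b hblt
    have := hanti (Set.mem_Ici.mpr hbpos.le) (Set.mem_Ici.mpr (hbpos.le.trans hblt.le)) hblt
    rwa [hbzero] at this
  · rintro y ⟨hypos, hyzero, _, _⟩
    rcases lt_trichotomy y bstar with h | h | h
    · exfalso
      have := hanti (Set.mem_Ici.mpr hypos.le) (Set.mem_Ici.mpr hbpos.le) h
      rw [hyzero, hbzero] at this
      exact lt_irrefl 0 this
    · exact h
    · exfalso
      have := hanti (Set.mem_Ici.mpr hbpos.le) (Set.mem_Ici.mpr (hbpos.le.trans h.le)) h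
      rw [hyzero, hbzero] at this
      exact lt_irrefl 0 this
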